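/- arXiv:1705.10931 — 3 statements merged into one kernel-verified Lean document; each statement's English description precedes it below -/
import Mathlib

section
/- With the parameter values τ_R = −(σ_R+1), δ_L = (1−σ_Lσ_R²)/(σ_R(σ_R+1)), τ_L = 1/(σ_R²+1) − (σ_L+σ_R)/(σ_R+1), σ_R > 1, the 2×2 matrix C = [ω₁ᵀ; ω₂ᵀ] M_Y [ζ₁ ζ₂], where M_Y = A_R A_L and ω_j, ζ_j are the normalized left/right eigenvectors of M_X = A_R A_L A_R for eigenvalues σ_R + 1/σ_R and σ_R/(σ_R²+1), satisfies det(C) = 1/σ_R. -/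
open Matrix

theorem detC_eq_inv_sigmaR (σL σR : ℝ) (hσR : σR > 1) :
    let τR : ℝ := -(σR + 1)
    let δL : ℝ := (1 - σL * σR ^ 2) / (σR * (σR + 1))
    let τL : ℝ := 1 / (σR ^ 2 + 1) - (σL + σR) / (σR + 1)
    let AL : Matrix (Fin 3) (Fin 3) ℝ := !![τL, 1, 0; -σL, 0, 1; δL, 0, 0]
    let AR : Matrix (Fin 3) (Fin 3) ℝ := !![τR, 1, 0; -σR, 0, 1; 0, 0, 0]
    let MY : Matrix (Fin 3) (Fin 3) ℝ := AR * AL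
    let ω₁ : Fin 3 → ℝ := (1 / (σR ^ 2 - σR + 1)) • ![1, σR - 1, -σR]
    let ω₂ : Fin 3 → ℝ :=
      (1 / (σR ^ 2 - σR + 1)) • ![-(σR - 1), σR, -(σR + 1 / σR)]
    let ζ₁ : Fin 3 → ℝ := ![σR, σR - 1, 0]
    let ζ₂ : Fin 3 → ℝ := ![-(σR - 1), 1, 0]
    let C : Matrix (Fin 2) (Fin 2) ℝ :=
      !![ω₁ ⬝ᵥ (MY *ᵥ ζ₁), ω₁ ⬝ᵥ (MY *ᵥ ζ₂);
         ω₂ ⬝ᵥ (MY *ᵥ ζ₁), ω₂ ⬝ᵥ (MY *ᵥ ζ₂)]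
    C.det = 1 / σR := by
  have h0 : σR ≠ 0 := by nlinarith
  have h1 : σR + 1 ≠ 0 := by nlinarith
  have h2 : σR ^ 2 + 1 ≠ 0 := by positivity
  have h3 : σR ^ 2 - σR + 1 ≠ 0 := by nlinarith
  intro τR δL τL AL AR MY ω₁ ω₂ ζ₁ ζ₂ C
  simp only [C, MY, AL, AR, ω₁, ω₂, ζ₁, ζ₂, τR, τL, δL, det_fin_two_of,
    Matrix.mul_fin_three, mulVec, dotProduct, Fin.sum_univ_three,
    Pi.smul_apply, smul_eq_mul]
  simp [Matrix.cons_val_zero, Matrix.cons_val_one]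
  field_simp
  rw [div_eq_iff (pow_ne_zero 2 (by nlinarith))]
  ring
end

section
/- With A_L, A_R the border-collision normal form matrices with τ_R = −(σ_R+1), δ_R = 0, δ_L = (1−σ_Lσ_R²)/(σ_R(σ_R+1)), τ_L = 1/(σ_R²+1) − (σ_L+σ_R)/(σ_R+1), and σ_R > 1, the fixed point x₀ of x ↦ A_R A_L A_R x + (I + A_R + A_R A_L)e₁ is x₀ = (1/(σ_R²−σ_R+1))·(σ_R², −1, 0)ᵀ, and x₁ = A_R x₀ + e₁ = (1/(σ_R²−σ_R+1))·(−σ_R(σ_R²+1), −σ_R³, 0)ᵀ. -/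
open Matrix

theorem X_cycle_points (σL σR : ℝ) (hσR : σR > 1) :
    let τR : ℝ := -(σR + 1)
    let δL : ℝ := (1 - σL * σR ^ 2) / (σR * (σR + 1))
    let τL : ℝ := 1 / (σR ^ 2 + 1) - (σL + σR) / (σR + 1)
    let AL : Matrix (Fin 3) (Fin 3) ℝ := !![τL, 1, 0; -σL, 0, 1; δL, 0, 0]
    let AR : Matrix (Fin 3) (Fin 3) ℝ := !![τR, 1, 0; -σR, 0, 1; 0, 0, 0]
    let e₁ : Fin 3 → ℝ := ![1, 0, 0]
    let x₀ : Fin 3 → ℝ := (1 / (σR ^ 2 - σR + 1)) • ![σR ^ 2, -1, 0]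
    let x₁ : Fin 3 → ℝ :=
      (1 / (σR ^ 2 - σR + 1)) • ![-(σR * (σR ^ 2 + 1)), -σR ^ 3, 0]
    x₀ = (AR * AL * AR) *ᵥ x₀ + ((1 : Matrix (Fin 3) (Fin 3) ℝ) + AR + AR * AL) *ᵥ e₁ ∧
      x₁ = AR *ᵥ x₀ + e₁ := by
  intro τR δL τL AL AR e₁ x₀ x₁
  have h0 : σR ≠ 0 := by nlinarith
  have h1 : σR + 1 ≠ 0 := by nlinarith
  have h2 : σR ^ 2 + 1 ≠ 0 := by nlinarith
  have h3 : σR ^ 2 - σR + 1 ≠ 0 := by nlinarith [sq_nonneg (σR - 1)]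
  constructor <;> funext i <;> fin_cases i <;>
    simp [x₀, x₁, AL, AR, e₁, τR, τL, δL, Matrix.mul_apply, Matrix.mulVec,
      dotProduct, Fin.sum_univ_three, Matrix.one_apply] <;>
    field_simp [show σR * (σR - 1) + 1 ≠ 0 by nlinarith [sq_nonneg (σR - 1)]] <;> ring
end

section
/- The first component of X_p(t) (the periodic solution of the forced linear system) attains maximum value γ/√((α₁−α₃)²+(α₂−1)²) − 1 over t ∈ ℝ; in particular, the maximum of the first component equals 0 exactly when γ = √((α₁−α₃)²+(α₂−1)²). -/
theorem grazing_condition (α₁ α₂ α₃ γ : ℝ)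
    (h : (α₁ - α₃) ^ 2 + (α₂ - 1) ^ 2 ≠ 0) (hγ : γ > 0) :
    let Xp : ℝ → Fin 3 → ℝ := fun t =>
      (γ / ((α₁ - α₃) ^ 2 + (α₂ - 1) ^ 2)) •
          (Real.cos t • ![α₁ - α₃, α₂ - 1, -(α₁ - α₃)] +
            Real.sin t • ![α₂ - 1, -(α₁ - α₃), -(α₂ - 1)]) -
        ![1, 0, 0]
    IsGreatest (Set.range fun t => Xp t 0)
        (γ / Real.sqrt ((α₁ - α₃) ^ 2 + (α₂ - 1) ^ 2) - 1) ∧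
      (γ / Real.sqrt ((α₁ - α₃) ^ 2 + (α₂ - 1) ^ 2) - 1 = 0 ↔
        γ = Real.sqrt ((α₁ - α₃) ^ 2 + (α₂ - 1) ^ 2)) := by
  intro Xp
  set a := α₁ - α₃
  set b := α₂ - 1
  set S := a ^ 2 + b ^ 2 with hS
  have hSpos : 0 < S := by
    rcases lt_or_eq_of_le (by positivity : (0:ℝ) ≤ S) with h' | h'
    · exact h'
    · exact absurd h'.symm h
  have hsqrtpos : 0 < Real.sqrt S := Real.sqrt_pos.mpr hSpos
  have hsq : Real.sqrt S * Real.sqrt S = S := Real.mul_self_sqrt hSpos.le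
  have hXp : ∀ t, Xp t 0 = (γ / S) * (a * Real.cos t + b * Real.sin t) - 1 := by
    intro t
    simp only [Xp, Pi.sub_apply, Pi.smul_apply, Pi.add_apply, Matrix.cons_val_zero,
      smul_eq_mul]
    ring
  constructor
  · constructor
    · -- attained at t = arg (a + b i)
      set z : ℂ := ⟨a, b⟩ with hz
      have hnsq : Complex.normSq z = S := by
        rw [Complex.normSq_mk]; rw [hS]; ring
      have hzne : z ≠ 0 := by
        intro h0
        apply h
        rw [← hnsq, h0, map_zero]
      have habs : ‖z‖ = Real.sqrt S := by
        rw [Complex.norm_def, hnsq]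
      refine ⟨z.arg, ?_⟩
      have hc := Complex.cos_arg hzne
      have hs := Complex.sin_arg z
      show Xp z.arg 0 = γ / Real.sqrt S - 1
      rw [hXp]
      rw [hc, hs, habs]
      have : a * (z.re / Real.sqrt S) + b * (z.im / Real.sqrt S) = Real.sqrt S := by
        show a * (a / Real.sqrt S) + b * (b / Real.sqrt S) = Real.sqrt S
        field_simp
        nlinarith [hsq]
      rw [this]
      congr 1
      rw [div_mul_eq_mul_div, div_eq_div_iff hSpos.ne' hsqrtpos.ne']
      nlinarith [hsq]
    · rintro x ⟨t, rfl⟩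
      show Xp t 0 ≤ γ / Real.sqrt S - 1
      rw [hXp]
      have hbound : a * Real.cos t + b * Real.sin t ≤ Real.sqrt S := by
        nlinarith [sq_nonneg (a * Real.sin t - b * Real.cos t),
          Real.sin_sq_add_cos_sq t, hsq, hsqrtpos,
          sq_nonneg (a * Real.cos t + b * Real.sin t - Real.sqrt S)]
      have hγS : 0 < γ / S := div_pos hγ hSpos
      have : (γ / S) * (a * Real.cos t + b * Real.sin t) ≤ (γ / S) * Real.sqrt S :=
        mul_le_mul_of_nonneg_left hbound hγS.le
      have heq : (γ / S) * Real.sqrt S = γ / Real.sqrt S := by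
        rw [div_mul_eq_mul_div, eq_div_iff hsqrtpos.ne']
        rw [div_mul_eq_mul_div, div_eq_iff hSpos.ne']
        nlinarith [hsq]
      linarith [heq ▸ this]
  · constructor
    · intro h0
      have : γ / Real.sqrt S = 1 := by linarith
      field_simp at this
      linarith
    · intro h0
      rw [h0, div_self hsqrtpos.ne']
      ring
end
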